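/- (Multi-Symplectic Bidiagonalization Decomposition) Let M ∈ ℝ^{4m×4n} be JRS-symmetric. Then there exist orthogonal multi-symplectic matrices Q ∈ ℝ^{4m×4m} and P ∈ ℝ^{4n×4n} and an upper bidiagonal matrix B ∈ ℝ^{m×n} such that M = Q · diag(B,B,B,B) · Pᵀ, where diag(B,B,B,B) ∈ ℝ^{4m×4n} is the block-diagonal matrix with B repeated four times along the diagonal of the 4×4 block partition. -/

import Mathlib

open Matrix Kronecker

noncomputable section

/-- The 4×4 block-sign matrix defining `J_n`. -/
def Jq : Matrix (Fin 4) (Fin 4) ℝ :=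
  !![0, 0, -1, 0; 0, 0, 0, -1; 1, 0, 0, 0; 0, 1, 0, 0]

/-- The 4×4 block-sign matrix defining `R_n`. -/
def Rq : Matrix (Fin 4) (Fin 4) ℝ :=
  !![0, -1, 0, 0; 1, 0, 0, 0; 0, 0, 0, 1; 0, 0, -1, 0]

/-- The 4×4 block-sign matrix defining `S_n`. -/
def Sq : Matrix (Fin 4) (Fin 4) ℝ :=
  !![0, 0, 0, -1; 0, 0, 1, 0; 0, -1, 0, 0; 1, 0, 0, 0]

/-- `J_n = [[0,0,-I,0],[0,0,0,-I],[I,0,0,0],[0,I,0,0]]`, as a Kronecker product. -/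
def Jmat (n : ℕ) : Matrix (Fin 4 × Fin n) (Fin 4 × Fin n) ℝ :=
  Jq ⊗ₖ (1 : Matrix (Fin n) (Fin n) ℝ)

/-- `R_n = [[0,-I,0,0],[I,0,0,0],[0,0,0,I],[0,0,-I,0]]`. -/
def Rmat (n : ℕ) : Matrix (Fin 4 × Fin n) (Fin 4 × Fin n) ℝ :=
  Rq ⊗ₖ (1 : Matrix (Fin n) (Fin n) ℝ)

/-- `S_n = [[0,0,0,-I],[0,0,I,0],[0,-I,0,0],[I,0,0,0]]`. -/
def Smat (n : ℕ) : Matrix (Fin 4 × Fin n) (Fin 4 × Fin n) ℝ :=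
  Sq ⊗ₖ (1 : Matrix (Fin n) (Fin n) ℝ)

/-- `M` is JRS-symmetric: `J_m M J_nᵀ = M`, `R_m M R_nᵀ = M`, `S_m M S_nᵀ = M`. -/
def JRSSymmetric {m n : ℕ} (M : Matrix (Fin 4 × Fin m) (Fin 4 × Fin n) ℝ) : Prop :=
  Jmat m * M * (Jmat n)ᵀ = M ∧ Rmat m * M * (Rmat n)ᵀ = M ∧ Smat m * M * (Smat n)ᵀ = M

/-- `O ∈ ℝ^{4m×4n}` is multi-symplectic: `O J_n Oᵀ = J_m`, `O R_n Oᵀ = R_m`, `O S_n Oᵀ = S_m`. -/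
def MultiSymplectic {m n : ℕ} (O : Matrix (Fin 4 × Fin m) (Fin 4 × Fin n) ℝ) : Prop :=
  O * Jmat n * Oᵀ = Jmat m ∧ O * Rmat n * Oᵀ = Rmat m ∧ O * Smat n * Oᵀ = Smat m

/-- `diag(B,B,B,B)`: the block-diagonal matrix with `B` repeated four times. -/
def blockDiag4 {m n : ℕ} (B : Matrix (Fin m) (Fin n) ℝ) :
    Matrix (Fin 4 × Fin m) (Fin 4 × Fin n) ℝ :=
  (1 : Matrix (Fin 4) (Fin 4) ℝ) ⊗ₖ B

/-- `B` is upper bidiagonal: `B i j = 0` unless `j = i` or `j = i + 1`. -/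
def UpperBidiagonal {m n : ℕ} (B : Matrix (Fin m) (Fin n) ℝ) : Prop :=
  ∀ (i : Fin m) (j : Fin n), (j : ℕ) ≠ (i : ℕ) → (j : ℕ) ≠ (i : ℕ) + 1 → B i j = 0

open Quaternion

namespace MSB


abbrev Q4 := Quaternion ℝ

instance : StarModule ℝ Q4 := ⟨fun r q => by ext <;> simp⟩

def nrm {n : ℕ} (x : Fin n → Q4) : ℝ := Real.sqrt (∑ j, normSq (x j))

lemma nrm_nonneg {n : ℕ} (x : Fin n → Q4) : 0 ≤ nrm x := Real.sqrt_nonneg _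

lemma nrm_sq {n : ℕ} (x : Fin n → Q4) : nrm x ^ 2 = ∑ j, normSq (x j) := by
  rw [nrm, Real.sq_sqrt]
  exact Finset.sum_nonneg fun j _ => normSq_nonneg

lemma coe_sum {n : ℕ} (f : Fin n → ℝ) : ((∑ j, f j : ℝ) : Q4) = ∑ j, ((f j : ℝ) : Q4) :=
  map_sum (algebraMap ℝ Q4) f Finset.univ

lemma sum_star_self {n : ℕ} (x : Fin n → Q4) :
    ∑ j, star (x j) * x j = ((nrm x ^ 2 : ℝ) : Q4) := by
  rw [nrm_sq, coe_sum]
  exact Finset.sum_congr rfl fun j _ => star_mul_self (x j)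

lemma householder_real {n' : ℕ} (x : Fin (n' + 1) → Q4) (a : ℝ) (ha : 0 ≤ a)
    (hx0 : x 0 = (a : Q4)) :
    ∃ H : Matrix (Fin (n' + 1)) (Fin (n' + 1)) Q4, H * Hᴴ = 1 ∧ Hᴴ * H = 1 ∧
      H.mulVec x = fun i : Fin (n' + 1) => if (i : ℕ) = 0 then ((nrm x : ℝ) : Q4) else 0 := by
  set N := nrm x with hNdef
  set e : Fin (n' + 1) → Q4 := fun i : Fin (n' + 1) =>
    if (i : ℕ) = 0 then ((N : ℝ) : Q4) else 0 with he
  set u : Fin (n' + 1) → Q4 := fun i => x i - e i with hu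
  have hue : ∀ i, u i = x i - e i := fun i => rfl
  have hNnn : 0 ≤ N := nrm_nonneg x
  have haN : a ≤ N := by
    have h1 : a ^ 2 ≤ N ^ 2 := by
      rw [nrm_sq]
      have : normSq (x 0) ≤ ∑ j, normSq (x j) :=
        Finset.single_le_sum (f := fun j => normSq (x j)) (fun j _ => normSq_nonneg)
          (Finset.mem_univ (0 : Fin (n' + 1)))
      rwa [hx0, normSq_coe] at this
    nlinarith
  have hval0 : ∀ i : Fin (n' + 1), ¬ i = 0 → ¬ ((i : ℕ) = 0) := fun i hi h =>
    hi (Fin.ext h)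
  have hsum_e_left : ∀ f : Fin (n' + 1) → Q4,
      ∑ i, star (e i) * f i = ((N : ℝ) : Q4) * f 0 := by
    intro f
    rw [Finset.sum_eq_single 0]
    · simp [he]
    · intro b _ hb
      simp [he, hval0 b hb, hb]
    · simp
  have hip : ∑ i, star (u i) * x i = (((N * (N - a)) : ℝ) : Q4) := by
    have h2 : ∀ i, star (u i) * x i = star (x i) * x i - star (e i) * x i := by
      intro i; rw [hue, star_sub, sub_mul]
    rw [Finset.sum_congr rfl fun i _ => h2 i, Finset.sum_sub_distrib, sum_star_self,
      hsum_e_left, hx0, ← hNdef, ← Quaternion.coe_mul, ← Quaternion.coe_sub]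
    exact congrArg _ (by ring)
  have hSval : ∑ i, normSq (u i) = 2 * (N * (N - a)) := by
    have h3 : ∀ i, normSq (u i) = normSq (x i) + normSq (e i) + 2 * (x i * star (-e i)).re := by
      intro i
      rw [hue, sub_eq_add_neg, normSq_add, normSq_neg]
    rw [Finset.sum_congr rfl fun i _ => h3 i, Finset.sum_add_distrib, Finset.sum_add_distrib,
      ← nrm_sq, ← hNdef]
    have h4 : ∑ i, normSq (e i) = N ^ 2 := by
      rw [Finset.sum_eq_single 0]
      · simp [he, normSq_coe]
      · intro b _ hb; simp [he, hval0 b hb, hb]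
      · simp
    have h5 : ∑ i, 2 * (x i * star (-e i)).re = -(2 * (N * a)) := by
      rw [Finset.sum_eq_single 0]
      · simp [he, hx0, ← Quaternion.coe_neg, ← Quaternion.coe_mul]
        ring
      · intro b _ hb; simp [he, hval0 b hb, hb]
      · simp
    rw [h4, h5]; ring
  by_cases hu0 : u = 0
  · refine ⟨1, by simp, by simp, ?_⟩
    rw [one_mulVec]
    funext i
    have h6 : x i - e i = 0 := by rw [← hue, hu0]; rfl
    rw [sub_eq_zero] at h6
    rw [h6, he]
  · have hSnn : ∀ i ∈ Finset.univ, (0:ℝ) ≤ normSq (u i) := fun i _ => normSq_nonneg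
    have hSpos : 0 < ∑ i, normSq (u i) := by
      rcases lt_or_eq_of_le (Finset.sum_nonneg hSnn) with h | h
      · exact h
      · exfalso
        apply hu0
        funext i
        exact normSq_eq_zero.mp ((Finset.sum_eq_zero_iff_of_nonneg hSnn).mp h.symm i
          (Finset.mem_univ i))
    have hNa : 0 < N * (N - a) := by nlinarith [hSval, hSpos]
    set S : ℝ := ∑ i, normSq (u i) with hSdef
    set c : ℝ := 2 / S with hc
    have hSne : S ≠ 0 := ne_of_gt hSpos
    set P : Matrix (Fin (n' + 1)) (Fin (n' + 1)) Q4 := Matrix.of fun i j => u i * star (u j)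
      with hP
    have hPe : ∀ i j, P i j = u i * star (u j) := fun i j => rfl
    have hPstar : Pᴴ = P := by
      refine Matrix.ext fun i j => ?_
      rw [conjTranspose_apply, hPe, hPe, StarMul.star_mul, star_star]
    have hPP : P * P = S • P := by
      refine Matrix.ext fun i j => ?_
      rw [mul_apply, Matrix.smul_apply]
      have h7 : ∀ k, P i k * P k j = normSq (u k) • (P i j) := by
        intro k
        rw [hPe, hPe, hPe, mul_assoc, ← mul_assoc (star (u k)), star_mul_self, coe_mul_eq_smul,
          mul_smul_comm]
      rw [Finset.sum_congr rfl fun k _ => h7 k, ← Finset.sum_smul]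
    set H : Matrix (Fin (n' + 1)) (Fin (n' + 1)) Q4 := 1 - c • P with hH
    have hHstar : Hᴴ = H := by
      rw [hH, conjTranspose_sub, conjTranspose_one, conjTranspose_smul, hPstar, star_trivial]
    have hHH : H * H = 1 := by
      have hPcP : (c • P) * (c • P) = (c * (c * S)) • P := by
        rw [smul_mul_assoc, mul_smul_comm, hPP, smul_smul, smul_smul, mul_assoc]
      have hcS : c * S = 2 := by rw [hc]; exact div_mul_cancel₀ 2 hSne
      have hcc : c * (c * S) = c + c := by rw [hcS]; ring
      rw [hH, sub_mul, mul_sub, mul_sub, one_mul, mul_one, hPcP, hcc, add_smul]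
      have hcan : c • P - (c • P + c • P) = -(c • P) := by
        rw [sub_add_eq_sub_sub, sub_self, zero_sub]
      rw [hcan, sub_neg_eq_add, one_mul, sub_add_cancel]
    refine ⟨H, by rw [hHstar, hHH], by rw [hHstar, hHH], ?_⟩
    have hipc : c * (N * (N - a)) = 1 := by
      rw [hc, div_mul_eq_mul_div, div_eq_one_iff_eq hSne, hSval]
    funext i
    rw [hH, sub_mulVec, one_mulVec, smul_mulVec]
    have hPx : P.mulVec x i = u i * (((N * (N - a)) : ℝ) : Q4) := by
      simp only [mulVec, dotProduct, hPe]
      rw [← hip, Finset.mul_sum]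
      exact Finset.sum_congr rfl fun j _ => by rw [mul_assoc]
    have h10 : (c • P.mulVec x) i = u i := by
      rw [Pi.smul_apply, hPx, mul_coe_eq_smul, smul_smul, hipc, one_smul]
    rw [Pi.sub_apply, h10, hue, sub_sub_cancel, he]

lemma householder {n : ℕ} (x : Fin n → Q4) :
    ∃ U : Matrix (Fin n) (Fin n) Q4, U * Uᴴ = 1 ∧ Uᴴ * U = 1 ∧
      U.mulVec x = fun i : Fin n => if (i : ℕ) = 0 then ((nrm x : ℝ) : Q4) else 0 := by
  cases n with
  | zero => exact ⟨1, by simp, by simp, funext fun i => i.elim0⟩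
  | succ n' =>
    classical
    set b : ℝ := Real.sqrt (normSq (x 0)) with hb
    have hbnn : 0 ≤ b := Real.sqrt_nonneg _
    have hb2 : b ^ 2 = normSq (x 0) := Real.sq_sqrt normSq_nonneg
    set t : Q4 := if x 0 = 0 then 1 else star (x 0) * ((b⁻¹ : ℝ) : Q4) with ht
    have htx : t * x 0 = ((b : ℝ) : Q4) := by
      by_cases h0 : x 0 = 0
      · rw [ht, if_pos h0, h0]
        have : b = 0 := by
          rw [hb, h0]; simp
        rw [this]; simp
      · have hbne : b ≠ 0 := by
          intro h
          apply h0
          rw [← normSq_eq_zero, ← hb2, h]; ring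
        rw [ht, if_neg h0, mul_assoc, coe_commutes, ← mul_assoc, star_mul_self, ← hb2,
          ← Quaternion.coe_mul]
        congr 1
        field_simp
    have htt : normSq t = 1 := by
      by_cases h0 : x 0 = 0
      · rw [ht, if_pos h0]; simp
      · have hbne : b ≠ 0 := by
          intro h
          apply h0
          rw [← normSq_eq_zero, ← hb2, h]; ring
        rw [ht, if_neg h0, _root_.map_mul, normSq_star, normSq_coe, ← hb2]
        field_simp
    set d : Fin (n' + 1) → Q4 := fun i => if i = 0 then t else 1 with hd
    have hdd : ∀ i, d i * star (d i) = 1 := by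
      intro i
      rw [hd]
      by_cases h : i = 0 <;> simp [h, self_mul_star, htt]
    have hdd' : ∀ i, star (d i) * d i = 1 := by
      intro i
      rw [hd]
      by_cases h : i = 0 <;> simp [h, star_mul_self, htt]
    set D : Matrix (Fin (n' + 1)) (Fin (n' + 1)) Q4 := diagonal d with hD
    have hDU : D * Dᴴ = 1 := by
      have h1 : (fun i => d i * star d i) = fun _ : Fin (n' + 1) => (1 : Q4) := funext hdd
      rw [hD, diagonal_conjTranspose, diagonal_mul_diagonal, h1]
      exact diagonal_one
    have hDU' : Dᴴ * D = 1 := by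
      have h1 : (fun i => star d i * d i) = fun _ : Fin (n' + 1) => (1 : Q4) := funext hdd'
      rw [hD, diagonal_conjTranspose, diagonal_mul_diagonal, h1]
      exact diagonal_one
    set x' : Fin (n' + 1) → Q4 := D.mulVec x with hx'
    have hx'i : ∀ i, x' i = d i * x i := by
      intro i; rw [hx', hD, mulVec_diagonal]
    have hx'0 : x' 0 = ((b : ℝ) : Q4) := by rw [hx'i, hd]; simpa using htx
    have hnrm : nrm x' = nrm x := by
      rw [nrm, nrm]
      congr 1
      refine Finset.sum_congr rfl fun i _ => ?_
      rw [hx'i, _root_.map_mul]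
      by_cases h : i = 0 <;> simp [hd, h, htt]
    obtain ⟨H, hH1, hH2, hH3⟩ := householder_real x' b hbnn hx'0
    refine ⟨H * D, ?_, ?_, ?_⟩
    · rw [conjTranspose_mul, mul_assoc, ← mul_assoc D, hDU, one_mul, hH1]
    · rw [conjTranspose_mul, mul_assoc, ← mul_assoc Hᴴ, hH2, one_mul, hDU']
    · rw [← mulVec_mulVec, ← hx', hH3, hnrm]

def oneExt {m n : ℕ} (X : Matrix (Fin m) (Fin n) Q4) : Matrix (Fin (m + 1)) (Fin (n + 1)) Q4 :=
  Matrix.of fun i j =>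
    Fin.cases (Fin.cases 1 (fun _ => 0) j) (fun i' => Fin.cases 0 (fun j' => X i' j') j) i

@[simp] lemma oneExt_zero_zero {m n : ℕ} (X : Matrix (Fin m) (Fin n) Q4) :
    oneExt X 0 0 = 1 := by simp [oneExt]

@[simp] lemma oneExt_zero_succ {m n : ℕ} (X : Matrix (Fin m) (Fin n) Q4) (j : Fin n) :
    oneExt X 0 j.succ = 0 := by simp [oneExt]

@[simp] lemma oneExt_succ_zero {m n : ℕ} (X : Matrix (Fin m) (Fin n) Q4) (i : Fin m) :
    oneExt X i.succ 0 = 0 := by simp [oneExt]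

@[simp] lemma oneExt_succ_succ {m n : ℕ} (X : Matrix (Fin m) (Fin n) Q4) (i : Fin m)
    (j : Fin n) : oneExt X i.succ j.succ = X i j := by simp [oneExt]

lemma oneExt_mul {m n k : ℕ} (X : Matrix (Fin m) (Fin n) Q4) (Y : Matrix (Fin n) (Fin k) Q4) :
    oneExt X * oneExt Y = oneExt (X * Y) := by
  refine Matrix.ext fun i j => ?_
  rw [mul_apply, Fin.sum_univ_succ]
  induction i using Fin.cases with
  | zero =>
    induction j using Fin.cases with
    | zero => simp
    | succ j' => simp
  | succ i' =>
    induction j using Fin.cases with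
    | zero => simp
    | succ j' => simp [mul_apply]

lemma oneExt_conjTranspose {m n : ℕ} (X : Matrix (Fin m) (Fin n) Q4) :
    (oneExt X)ᴴ = oneExt Xᴴ := by
  refine Matrix.ext fun i j => ?_
  rw [conjTranspose_apply]
  induction i using Fin.cases with
  | zero =>
    induction j using Fin.cases with
    | zero => simp
    | succ j' => simp
  | succ i' =>
    induction j using Fin.cases with
    | zero => simp
    | succ j' => simp [conjTranspose_apply]

lemma oneExt_one {m : ℕ} : oneExt (1 : Matrix (Fin m) (Fin m) Q4) = 1 := by
  refine Matrix.ext fun i j => ?_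
  induction i using Fin.cases with
  | zero =>
    induction j using Fin.cases with
    | zero => simp
    | succ j' => simp [one_apply, (Fin.succ_ne_zero j').symm]
  | succ i' =>
    induction j using Fin.cases with
    | zero => simp [one_apply, Fin.succ_ne_zero i']
    | succ j' => simp [one_apply, Fin.succ_inj]

/-- V fixes the first basis vector (in a strong, bilateral sense). -/
def Efix {n : ℕ} (V : Matrix (Fin n) (Fin n) Q4) : Prop :=
  ∀ i j : Fin n, ((i : ℕ) = 0 ∨ (j : ℕ) = 0) →
    V i j = if (i : ℕ) = (j : ℕ) then 1 else 0

lemma efix_one {n : ℕ} : Efix (1 : Matrix (Fin n) (Fin n) Q4) := by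
  intro i j _
  rw [one_apply]
  by_cases h : i = j
  · simp [h]
  · rw [if_neg h, if_neg (fun hv => h (Fin.ext hv))]

lemma efix_oneExt {n : ℕ} (X : Matrix (Fin n) (Fin n) Q4) : Efix (oneExt X) := by
  intro i j h
  induction i using Fin.cases with
  | zero =>
    induction j using Fin.cases with
    | zero => simp
    | succ j' => simp
  | succ i' =>
    induction j using Fin.cases with
    | zero => simp
    | succ j' =>
      exfalso
      rcases h with h | h <;> simp at h

lemma mul_oneExt_left {m k : ℕ} (Z : Matrix (Fin m) (Fin m) Q4)
    (X : Matrix (Fin (m + 1)) (Fin k) Q4) :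
    (∀ j, (oneExt Z * X) 0 j = X 0 j) ∧
    (∀ (i : Fin m) (j : Fin k), (oneExt Z * X) i.succ j = ∑ l, Z i l * X l.succ j) := by
  constructor
  · intro j
    rw [mul_apply, Fin.sum_univ_succ]
    simp
  · intro i j
    rw [mul_apply, Fin.sum_univ_succ]
    simp

lemma mul_oneExt_right {n k : ℕ} (Z : Matrix (Fin n) (Fin n) Q4)
    (X : Matrix (Fin k) (Fin (n + 1)) Q4) :
    (∀ i, (X * (oneExt Z)ᴴ) i 0 = X i 0) ∧
    (∀ (i : Fin k) (j : Fin n), (X * (oneExt Z)ᴴ) i j.succ = ∑ l, X i l.succ * star (Z j l)) := by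
  constructor
  · intro i
    rw [mul_apply, Fin.sum_univ_succ]
    simp [conjTranspose_apply]
  · intro i j
    rw [mul_apply, Fin.sum_univ_succ]
    simp [conjTranspose_apply]

lemma unitary_mul {k : ℕ} {X Y : Matrix (Fin k) (Fin k) Q4}
    (hX1 : X * Xᴴ = 1) (hX2 : Xᴴ * X = 1) (hY1 : Y * Yᴴ = 1) (hY2 : Yᴴ * Y = 1) :
    (X * Y) * (X * Y)ᴴ = 1 ∧ (X * Y)ᴴ * (X * Y) = 1 := by
  constructor
  · rw [conjTranspose_mul, Matrix.mul_assoc, ← Matrix.mul_assoc Y, hY1, one_mul, hX1]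
  · rw [conjTranspose_mul, Matrix.mul_assoc, ← Matrix.mul_assoc Xᴴ, hX2, one_mul, hY2]

lemma quat_bidiag : ∀ (n m : ℕ) (A : Matrix (Fin m) (Fin n) Q4),
    ∃ (U : Matrix (Fin m) (Fin m) Q4) (V : Matrix (Fin n) (Fin n) Q4)
      (B : Matrix (Fin m) (Fin n) ℝ),
      U * Uᴴ = 1 ∧ Uᴴ * U = 1 ∧ V * Vᴴ = 1 ∧ Vᴴ * V = 1 ∧ Efix V ∧
      UpperBidiagonal B ∧ A = U * (B.map fun r => ((r : ℝ) : Q4)) * Vᴴ := by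
  intro n
  induction n with
  | zero =>
    intro m A
    exact ⟨1, 1, 0, by simp, by simp, by simp, by simp, efix_one,
      fun i j => j.elim0, by refine Matrix.ext fun i j => j.elim0⟩
  | succ n' ih =>
    intro m A
    cases m with
    | zero =>
      exact ⟨1, 1, 0, by simp, by simp, by simp, by simp, efix_one,
        fun i j => i.elim0, by refine Matrix.ext fun i j => i.elim0⟩
    | succ m' =>
      obtain ⟨U₁, hU₁, hU₁', hU₁x⟩ := householder (fun i => A i 0)
      set γ : ℝ := nrm (fun i => A i 0) with hγ
      set A₁ : Matrix (Fin (m' + 1)) (Fin (n' + 1)) Q4 := U₁ * A with hA₁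
      have hA₁0 : ∀ i, A₁ i 0 = if (i : ℕ) = 0 then ((γ : ℝ) : Q4) else 0 := by
        intro i
        have : A₁ i 0 = (U₁.mulVec fun i => A i 0) i := by
          rw [hA₁, mul_apply, mulVec, dotProduct]
        rw [this, hU₁x]
      obtain ⟨W, hW, hW', hWr⟩ := householder (fun k : Fin n' => star (A₁ 0 k.succ))
      set δ : ℝ := nrm (fun k : Fin n' => star (A₁ 0 k.succ)) with hδ
      set A₂ : Matrix (Fin (m' + 1)) (Fin (n' + 1)) Q4 := A₁ * (oneExt W)ᴴ with hA₂
      have hA₂col : ∀ i, A₂ i 0 = A₁ i 0 := (mul_oneExt_right W A₁).1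
      have hA₂row : ∀ j : Fin n', A₂ 0 j.succ = if (j : ℕ) = 0 then ((δ : ℝ) : Q4) else 0 := by
        intro j
        rw [hA₂, (mul_oneExt_right W A₁).2 0 j]
        have h1 : ∀ l : Fin n', A₁ 0 l.succ * star (W j l)
            = star (W j l * star (A₁ 0 l.succ)) := by
          intro l
          rw [StarMul.star_mul, star_star]
        rw [Finset.sum_congr rfl fun l _ => h1 l, ← star_sum]
        have h2 : ∑ l, W j l * star (A₁ 0 l.succ)
            = (W.mulVec fun k : Fin n' => star (A₁ 0 k.succ)) j := by
          rw [mulVec, dotProduct]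
        rw [h2, hWr]
        by_cases h : (j : ℕ) = 0 <;> simp [h]
      set A'' : Matrix (Fin m') (Fin n') Q4 := Matrix.of fun i j => A₂ i.succ j.succ with hA''
      obtain ⟨U'', V'', B'', hU''1, hU''2, hV''1, hV''2, hVfix, hBd, hfac⟩ := ih m' A''
      set B : Matrix (Fin (m' + 1)) (Fin (n' + 1)) ℝ := Matrix.of fun i j =>
        Fin.cases (Fin.cases γ (fun j' => if (j' : ℕ) = 0 then δ else 0) j)
          (fun i' => Fin.cases 0 (fun j' => B'' i' j') j) i with hB
      have hB00 : B 0 0 = γ := by simp [hB]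
      have hB0s : ∀ j : Fin n', B 0 j.succ = if (j : ℕ) = 0 then δ else 0 := by
        intro j; simp [hB]
      have hBs0 : ∀ i : Fin m', B i.succ 0 = 0 := by intro i; simp [hB]
      have hBss : ∀ (i : Fin m') (j : Fin n'), B i.succ j.succ = B'' i j := by
        intro i j; simp [hB]
      have hkey : A₂ = oneExt U'' * ((B.map fun r => ((r : ℝ) : Q4)) * (oneExt V'')ᴴ) := by
        refine Matrix.ext fun i j => ?_
        induction i using Fin.cases with
        | zero =>
          rw [(mul_oneExt_left U'' _).1]
          induction j using Fin.cases with
          | zero =>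
            rw [(mul_oneExt_right V'' _).1, map_apply, hB00, hA₂col, hA₁0]
            simp
          | succ j' =>
            rw [(mul_oneExt_right V'' _).2]
            have h3 : ∀ l : Fin n', (B.map fun r => ((r : ℝ) : Q4)) 0 l.succ * star (V'' j' l)
                = if (l : ℕ) = 0 then ((δ : ℝ) : Q4) * star (V'' j' l) else 0 := by
              intro l
              rw [map_apply, hB0s]
              by_cases h : (l : ℕ) = 0 <;> simp [h]
            rw [Finset.sum_congr rfl fun l _ => h3 l, hA₂row]
            cases n' with
            | zero => exact j'.elim0
            | succ n'' =>
              rw [Finset.sum_eq_single 0]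
              · have h4 : V'' j' 0 = if (j' : ℕ) = 0 then 1 else 0 :=
                  hVfix j' 0 (Or.inr (Fin.val_zero _))
                rw [h4]
                by_cases h : (j' : ℕ) = 0 <;> simp [h]
              · intro b _ hb
                have hb' : ¬((b : ℕ) = 0) := fun hv => hb (Fin.ext (by rw [hv, Fin.val_zero]))
                rw [if_neg hb']
              · simp
        | succ i' =>
          rw [(mul_oneExt_left U'' _).2]
          induction j using Fin.cases with
          | zero =>
            have h5 : ∀ l : Fin m',
                ((B.map fun r => ((r : ℝ) : Q4)) * (oneExt V'')ᴴ) l.succ 0 = 0 := by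
              intro l
              rw [(mul_oneExt_right V'' _).1, map_apply, hBs0]
              simp
            rw [Finset.sum_congr rfl fun l _ => by rw [h5 l, mul_zero], Finset.sum_const_zero,
              hA₂col, hA₁0]
            simp
          | succ j' =>
            have h6 : ∀ l : Fin m',
                ((B.map fun r => ((r : ℝ) : Q4)) * (oneExt V'')ᴴ) l.succ j'.succ
                  = ((B''.map fun r => ((r : ℝ) : Q4)) * V''ᴴ) l j' := by
              intro l
              rw [(mul_oneExt_right V'' _).2, mul_apply]
              refine Finset.sum_congr rfl fun t _ => ?_
              rw [map_apply, hBss, conjTranspose_apply, map_apply]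
            rw [Finset.sum_congr rfl fun l _ => by rw [h6 l]]
            have h7 : A₂ i'.succ j'.succ = A'' i' j' := rfl
            rw [h7, hfac, Matrix.mul_assoc, mul_apply]
      -- assemble
      have hoU1 : oneExt U'' * (oneExt U'')ᴴ = 1 := by
        rw [oneExt_conjTranspose, oneExt_mul, hU''1, oneExt_one]
      have hoU2 : (oneExt U'')ᴴ * oneExt U'' = 1 := by
        rw [oneExt_conjTranspose, oneExt_mul, hU''2, oneExt_one]
      have hoV1 : oneExt V'' * (oneExt V'')ᴴ = 1 := by
        rw [oneExt_conjTranspose, oneExt_mul, hV''1, oneExt_one]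
      have hoV2 : (oneExt V'')ᴴ * oneExt V'' = 1 := by
        rw [oneExt_conjTranspose, oneExt_mul, hV''2, oneExt_one]
      have hoW1 : oneExt W * (oneExt W)ᴴ = 1 := by
        rw [oneExt_conjTranspose, oneExt_mul, hW, oneExt_one]
      have hoW2 : (oneExt W)ᴴ * oneExt W = 1 := by
        rw [oneExt_conjTranspose, oneExt_mul, hW', oneExt_one]
      have hU₁h1 : U₁ᴴ * (U₁ᴴ)ᴴ = 1 := by rw [conjTranspose_conjTranspose]; exact hU₁'
      have hU₁h2 : (U₁ᴴ)ᴴ * U₁ᴴ = 1 := by rw [conjTranspose_conjTranspose]; exact hU₁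
      have hoWh1 : (oneExt W)ᴴ * ((oneExt W)ᴴ)ᴴ = 1 := by
        rw [conjTranspose_conjTranspose]; exact hoW2
      have hoWh2 : ((oneExt W)ᴴ)ᴴ * (oneExt W)ᴴ = 1 := by
        rw [conjTranspose_conjTranspose]; exact hoW1
      refine ⟨U₁ᴴ * oneExt U'', (oneExt W)ᴴ * oneExt V'', B, ?_, ?_, ?_, ?_, ?_, ?_, ?_⟩
      · exact (unitary_mul hU₁h1 hU₁h2 hoU1 hoU2).1
      · exact (unitary_mul hU₁h1 hU₁h2 hoU1 hoU2).2
      · exact (unitary_mul hoWh1 hoWh2 hoV1 hoV2).1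
      · exact (unitary_mul hoWh1 hoWh2 hoV1 hoV2).2
      · rw [oneExt_conjTranspose, oneExt_mul]
        exact efix_oneExt _
      · -- upper bidiagonal
        intro i j
        induction i using Fin.cases with
        | zero =>
          induction j using Fin.cases with
          | zero => intro h1 _; exact absurd rfl h1
          | succ j' =>
            intro _ h2
            rw [hB0s]
            rw [Fin.val_succ, Fin.val_zero] at h2
            have : ¬ (j' : ℕ) = 0 := fun h => h2 (by rw [h])
            rw [if_neg this]
        | succ i' =>
          induction j using Fin.cases with
          | zero => intro _ _; exact hBs0 i'
          | succ j' =>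
            intro h1 h2
            rw [hBss]
            refine hBd i' j' ?_ ?_
            · intro h; apply h1; simp only [Fin.val_succ]; omega
            · intro h; apply h2; simp only [Fin.val_succ]; omega
      · -- factorization
        have hA : A = U₁ᴴ * A₂ * oneExt W := by
          rw [hA₂, Matrix.mul_assoc U₁ᴴ, Matrix.mul_assoc A₁, hoW2, Matrix.mul_one, hA₁,
            ← Matrix.mul_assoc, hU₁', Matrix.one_mul]
        rw [hA, hkey, conjTranspose_mul, conjTranspose_conjTranspose]
        simp only [Matrix.mul_assoc]

def rep (q : Q4) : Matrix (Fin 4) (Fin 4) ℝ :=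
  !![q.re, -q.imI, -q.imJ, -q.imK;
     q.imI, q.re, -q.imK, q.imJ;
     q.imJ, q.imK, q.re, -q.imI;
     q.imK, -q.imJ, q.imI, q.re]

lemma rep_add (p q : Q4) : rep (p + q) = rep p + rep q := by
  ext a b
  fin_cases a <;> fin_cases b <;> simp [rep, Matrix.vecHead, Matrix.vecTail] <;> ring

lemma rep_zero : rep 0 = 0 := by
  ext a b
  fin_cases a <;> fin_cases b <;> simp [rep, Matrix.vecHead, Matrix.vecTail]

def repHom : Q4 →+ Matrix (Fin 4) (Fin 4) ℝ := AddMonoidHom.mk' rep rep_add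

lemma rep_one : rep 1 = 1 := by
  ext a b
  fin_cases a <;> fin_cases b <;> simp [rep, one_apply, Matrix.vecHead, Matrix.vecTail]

lemma rep_mul (p q : Q4) : rep (p * q) = rep p * rep q := by
  ext a b
  fin_cases a <;> fin_cases b <;>
    simp [rep, Matrix.vecHead, Matrix.vecTail, mul_apply, Fin.sum_univ_four, Quaternion.re_mul, Quaternion.imI_mul,
      Quaternion.imJ_mul, Quaternion.imK_mul] <;> ring

lemma rep_star (q : Q4) : rep (star q) = (rep q)ᵀ := by
  ext a b
  fin_cases a <;> fin_cases b <;>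
    simp [rep, Matrix.vecHead, Matrix.vecTail, transpose_apply, Quaternion.re_star, Quaternion.imI_star, Quaternion.imJ_star,
      Quaternion.imK_star]

lemma rep_coe (r : ℝ) (a b : Fin 4) : rep ((r : ℝ) : Q4) a b = r * (1 : Matrix (Fin 4) (Fin 4) ℝ) a b := by
  fin_cases a <;> fin_cases b <;> simp [rep, one_apply, Matrix.vecHead, Matrix.vecTail]

lemma rep_commJ (q : Q4) : rep q * Jq = Jq * rep q := by
  ext a b
  fin_cases a <;> fin_cases b <;>
    simp [rep, Jq, Matrix.vecHead, Matrix.vecTail, mul_apply, Fin.sum_univ_four]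

lemma rep_commR (q : Q4) : rep q * Rq = Rq * rep q := by
  ext a b
  fin_cases a <;> fin_cases b <;>
    simp [rep, Rq, Matrix.vecHead, Matrix.vecTail, mul_apply, Fin.sum_univ_four]

lemma rep_commS (q : Q4) : rep q * Sq = Sq * rep q := by
  ext a b
  fin_cases a <;> fin_cases b <;>
    simp [rep, Sq, Matrix.vecHead, Matrix.vecTail, mul_apply, Fin.sum_univ_four]

lemma block_structure (X : Matrix (Fin 4) (Fin 4) ℝ)
    (hJ : Jq * X = X * Jq) (hR : Rq * X = X * Rq) :
    X = rep ⟨X 0 0, X 1 0, X 2 0, X 3 0⟩ := by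
  have eJ : ∀ a b : Fin 4, (Jq * X) a b = (X * Jq) a b := fun a b => by rw [hJ]
  have eR : ∀ a b : Fin 4, (Rq * X) a b = (X * Rq) a b := fun a b => by rw [hR]
  ext a b
  fin_cases a <;> fin_cases b
  · simp [rep, Matrix.vecHead, Matrix.vecTail]
  · have h := eR 0 0; simp [Rq, Matrix.vecHead, Matrix.vecTail, mul_apply, Fin.sum_univ_four] at h; simp [rep, Matrix.vecHead, Matrix.vecTail]; linarith
  · have h := eJ 0 0; simp [Jq, Matrix.vecHead, Matrix.vecTail, mul_apply, Fin.sum_univ_four] at h; simp [rep, Matrix.vecHead, Matrix.vecTail]; linarith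
  · have h1 := eJ 0 1; have h2 := eR 2 0
    simp [Jq, Matrix.vecHead, Matrix.vecTail, mul_apply, Fin.sum_univ_four] at h1
    simp [Rq, Matrix.vecHead, Matrix.vecTail, mul_apply, Fin.sum_univ_four] at h2
    simp [rep, Matrix.vecHead, Matrix.vecTail]; linarith
  · simp [rep, Matrix.vecHead, Matrix.vecTail]
  · have h := eR 1 0; simp [Rq, Matrix.vecHead, Matrix.vecTail, mul_apply, Fin.sum_univ_four] at h; simp [rep, Matrix.vecHead, Matrix.vecTail]; linarith
  · have h := eJ 1 0; simp [Jq, Matrix.vecHead, Matrix.vecTail, mul_apply, Fin.sum_univ_four] at h; simp [rep, Matrix.vecHead, Matrix.vecTail]; linarith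
  · have h1 := eJ 1 1; have h2 := eR 3 0
    simp [Jq, Matrix.vecHead, Matrix.vecTail, mul_apply, Fin.sum_univ_four] at h1
    simp [Rq, Matrix.vecHead, Matrix.vecTail, mul_apply, Fin.sum_univ_four] at h2
    simp [rep, Matrix.vecHead, Matrix.vecTail]; linarith
  · simp [rep, Matrix.vecHead, Matrix.vecTail]
  · have h := eR 2 0; simp [Rq, Matrix.vecHead, Matrix.vecTail, mul_apply, Fin.sum_univ_four] at h; simp [rep, Matrix.vecHead, Matrix.vecTail]; linarith
  · have h := eJ 2 0; simp [Jq, Matrix.vecHead, Matrix.vecTail, mul_apply, Fin.sum_univ_four] at h; simp [rep, Matrix.vecHead, Matrix.vecTail]; linarith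
  · have h1 := eJ 2 1; have h2 := eR 0 0
    simp [Jq, Matrix.vecHead, Matrix.vecTail, mul_apply, Fin.sum_univ_four] at h1
    simp [Rq, Matrix.vecHead, Matrix.vecTail, mul_apply, Fin.sum_univ_four] at h2
    simp [rep, Matrix.vecHead, Matrix.vecTail]; linarith
  · simp [rep, Matrix.vecHead, Matrix.vecTail]
  · have h := eR 3 0; simp [Rq, Matrix.vecHead, Matrix.vecTail, mul_apply, Fin.sum_univ_four] at h; simp [rep, Matrix.vecHead, Matrix.vecTail]; linarith
  · have h := eJ 3 0; simp [Jq, Matrix.vecHead, Matrix.vecTail, mul_apply, Fin.sum_univ_four] at h; simp [rep, Matrix.vecHead, Matrix.vecTail]; linarith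
  · have h1 := eJ 3 1; have h2 := eR 1 0
    simp [Jq, Matrix.vecHead, Matrix.vecTail, mul_apply, Fin.sum_univ_four] at h1
    simp [Rq, Matrix.vecHead, Matrix.vecTail, mul_apply, Fin.sum_univ_four] at h2
    simp [rep, Matrix.vecHead, Matrix.vecTail]; linarith

def psi {m n : ℕ} (A : Matrix (Fin m) (Fin n) Q4) :
    Matrix (Fin 4 × Fin m) (Fin 4 × Fin n) ℝ :=
  Matrix.of fun p q => rep (A p.2 q.2) p.1 q.1

lemma psi_apply {m n : ℕ} (A : Matrix (Fin m) (Fin n) Q4) (a b : Fin 4) (i : Fin m)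
    (j : Fin n) : psi A (a, i) (b, j) = rep (A i j) a b := rfl

lemma rep_sum {ι : Type*} (s : Finset ι) (f : ι → Q4) :
    rep (∑ x ∈ s, f x) = ∑ x ∈ s, rep (f x) := map_sum repHom f s

lemma psi_mul {m n k : ℕ} (A : Matrix (Fin m) (Fin n) Q4) (C : Matrix (Fin n) (Fin k) Q4) :
    psi (A * C) = psi A * psi C := by
  refine Matrix.ext fun p q => ?_
  obtain ⟨a, i⟩ := p; obtain ⟨b, j⟩ := q
  have l1 : psi (A * C) (a, i) (b, j) = ∑ t, rep (A i t * C t j) a b := by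
    rw [psi_apply, mul_apply, rep_sum, Matrix.sum_apply]
  have l2 : (psi A * psi C) (a, i) (b, j)
      = ∑ t : Fin n, ∑ c : Fin 4, rep (A i t) a c * rep (C t j) c b := by
    rw [mul_apply, Fintype.sum_prod_type, Finset.sum_comm]
    rfl
  rw [l1, l2]
  refine Finset.sum_congr rfl fun t _ => ?_
  rw [rep_mul, mul_apply]

lemma rep_one_apply (a b : Fin 4) : rep 1 a b = if a = b then (1 : ℝ) else 0 := by
  rw [rep_one, one_apply]

lemma rep_zero_apply (a b : Fin 4) : rep 0 a b = 0 := by rw [rep_zero]; rfl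

lemma psi_one {n : ℕ} : psi (1 : Matrix (Fin n) (Fin n) Q4) = 1 := by
  refine Matrix.ext fun p q => ?_
  obtain ⟨a, i⟩ := p; obtain ⟨b, j⟩ := q
  rw [psi_apply, one_apply, one_apply]
  by_cases h : i = j
  · subst h
    rw [if_pos rfl]
    by_cases hab : a = b <;> simp [hab, rep_one_apply, Prod.ext_iff]
  · have : ¬ ((a, i) = (b, j)) := fun hc => h (congrArg Prod.snd hc)
    rw [if_neg h, if_neg this, rep_zero_apply]

lemma psi_transpose {m n : ℕ} (A : Matrix (Fin m) (Fin n) Q4) :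
    (psi A)ᵀ = psi Aᴴ := by
  refine Matrix.ext fun p q => ?_
  obtain ⟨a, i⟩ := p; obtain ⟨b, j⟩ := q
  rw [transpose_apply, psi_apply, psi_apply, conjTranspose_apply, rep_star, transpose_apply]

lemma psi_comm_gen {m n : ℕ} (A : Matrix (Fin m) (Fin n) Q4) (T : Matrix (Fin 4) (Fin 4) ℝ)
    (hT : ∀ q, rep q * T = T * rep q) :
    psi A * (T ⊗ₖ (1 : Matrix (Fin n) (Fin n) ℝ))
      = (T ⊗ₖ (1 : Matrix (Fin m) (Fin m) ℝ)) * psi A := by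
  refine Matrix.ext fun p q => ?_
  obtain ⟨a, i⟩ := p; obtain ⟨b, j⟩ := q
  rw [mul_apply, mul_apply, Fintype.sum_prod_type, Fintype.sum_prod_type]
  have l1 : ∀ c : Fin 4,
      ∑ k, psi A (a, i) (c, k) * (T ⊗ₖ (1 : Matrix (Fin n) (Fin n) ℝ)) (c, k) (b, j)
        = rep (A i j) a c * T c b := by
    intro c
    rw [Finset.sum_eq_single j]
    · rw [psi_apply, kronecker_apply, one_apply_eq, mul_one]
    · intro k _ hk
      rw [kronecker_apply, one_apply_ne hk, mul_zero, mul_zero]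
    · simp
  have l2 : ∀ c : Fin 4,
      ∑ k, (T ⊗ₖ (1 : Matrix (Fin m) (Fin m) ℝ)) (a, i) (c, k) * psi A (c, k) (b, j)
        = T a c * rep (A i j) c b := by
    intro c
    rw [Finset.sum_eq_single i]
    · rw [psi_apply, kronecker_apply, one_apply_eq, mul_one]
    · intro k _ hk
      rw [kronecker_apply, one_apply_ne' hk, mul_zero, zero_mul]
    · simp
  rw [Finset.sum_congr rfl fun c _ => l1 c, Finset.sum_congr rfl fun c _ => l2 c]
  have h := congrFun (congrFun (hT (A i j)) a) b
  rw [mul_apply, mul_apply] at h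
  exact h

lemma kron_transpose_one {n : ℕ} (T : Matrix (Fin 4) (Fin 4) ℝ) :
    (T ⊗ₖ (1 : Matrix (Fin n) (Fin n) ℝ))ᵀ = Tᵀ ⊗ₖ 1 := by
  rw [← kroneckerMap_transpose, transpose_one]

lemma kron_mul_kron {n : ℕ} (T T' : Matrix (Fin 4) (Fin 4) ℝ) :
    (T ⊗ₖ (1 : Matrix (Fin n) (Fin n) ℝ)) * (T' ⊗ₖ 1) = (T * T') ⊗ₖ 1 := by
  rw [← mul_kronecker_mul, Matrix.one_mul]

lemma sym_to_comm {m n : ℕ} (M : Matrix (Fin 4 × Fin m) (Fin 4 × Fin n) ℝ)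
    (T : Matrix (Fin 4) (Fin 4) ℝ) (hT : Tᵀ * T = 1)
    (h : (T ⊗ₖ (1 : Matrix (Fin m) (Fin m) ℝ)) * M * (T ⊗ₖ (1 : Matrix (Fin n) (Fin n) ℝ))ᵀ = M) :
    (T ⊗ₖ (1 : Matrix (Fin m) (Fin m) ℝ)) * M = M * (T ⊗ₖ 1) := by
  have e : M * (T ⊗ₖ (1 : Matrix (Fin n) (Fin n) ℝ)) = (T ⊗ₖ (1 : Matrix (Fin m) (Fin m) ℝ)) * M *
      (T ⊗ₖ (1 : Matrix (Fin n) (Fin n) ℝ))ᵀ * (T ⊗ₖ (1 : Matrix (Fin n) (Fin n) ℝ)) := by rw [h]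
  show (T ⊗ₖ (1 : Matrix (Fin m) (Fin m) ℝ)) * M = M * (T ⊗ₖ (1 : Matrix (Fin n) (Fin n) ℝ))
  rw [e, Matrix.mul_assoc, Matrix.mul_assoc, kron_transpose_one, kron_mul_kron, hT,
    one_kronecker_one, Matrix.mul_one]

lemma entry_comm {m n : ℕ} (M : Matrix (Fin 4 × Fin m) (Fin 4 × Fin n) ℝ)
    (T : Matrix (Fin 4) (Fin 4) ℝ)
    (h : (T ⊗ₖ (1 : Matrix (Fin m) (Fin m) ℝ)) * M = M * (T ⊗ₖ (1 : Matrix (Fin n) (Fin n) ℝ)))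
    (i : Fin m) (j : Fin n) :
    T * (Matrix.of fun a b => M (a, i) (b, j)) = (Matrix.of fun a b => M (a, i) (b, j)) * T := by
  refine Matrix.ext fun a b => ?_
  have h1 := congrFun (congrFun h (a, i)) (b, j)
  rw [mul_apply, mul_apply, Fintype.sum_prod_type, Fintype.sum_prod_type] at h1
  rw [mul_apply, mul_apply]
  have l1 : ∀ c : Fin 4,
      ∑ k, (T ⊗ₖ (1 : Matrix (Fin m) (Fin m) ℝ)) (a, i) (c, k) * M (c, k) (b, j)
        = T a c * M (c, i) (b, j) := by
    intro c
    rw [Finset.sum_eq_single i]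
    · rw [kronecker_apply, one_apply_eq, mul_one]
    · intro k _ hk
      rw [kronecker_apply, one_apply_ne' hk, mul_zero, zero_mul]
    · simp
  have l2 : ∀ c : Fin 4,
      ∑ k, M (a, i) (c, k) * (T ⊗ₖ (1 : Matrix (Fin n) (Fin n) ℝ)) (c, k) (b, j)
        = M (a, i) (c, j) * T c b := by
    intro c
    rw [Finset.sum_eq_single j]
    · rw [kronecker_apply, one_apply_eq, mul_one]
    · intro k _ hk
      rw [kronecker_apply, one_apply_ne hk, mul_zero, mul_zero]
    · simp
  rw [Finset.sum_congr rfl fun c _ => l1 c, Finset.sum_congr rfl fun c _ => l2 c] at h1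
  exact h1

lemma Jq_orth : Jqᵀ * Jq = 1 := by
  ext a b
  fin_cases a <;> fin_cases b <;>
    simp [Jq, Matrix.vecHead, Matrix.vecTail, mul_apply, Fin.sum_univ_four, one_apply]

lemma Rq_orth : Rqᵀ * Rq = 1 := by
  ext a b
  fin_cases a <;> fin_cases b <;>
    simp [Rq, Matrix.vecHead, Matrix.vecTail, mul_apply, Fin.sum_univ_four, one_apply]

lemma psi_map {m n : ℕ} (B : Matrix (Fin m) (Fin n) ℝ) :
    psi (B.map fun r => ((r : ℝ) : Q4)) = (1 : Matrix (Fin 4) (Fin 4) ℝ) ⊗ₖ B := by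
  refine Matrix.ext fun p q => ?_
  obtain ⟨a, i⟩ := p; obtain ⟨b, j⟩ := q
  rw [psi_apply, map_apply, kronecker_apply, rep_coe, mul_comm]


lemma jrs_psi {m n : ℕ} (M : Matrix (Fin 4 × Fin m) (Fin 4 × Fin n) ℝ)
    (hM : JRSSymmetric M) : ∃ A : Matrix (Fin m) (Fin n) Q4, psi A = M := by
  have hJc : (Jq ⊗ₖ (1 : Matrix (Fin m) (Fin m) ℝ)) * M
      = M * (Jq ⊗ₖ (1 : Matrix (Fin n) (Fin n) ℝ)) :=
    sym_to_comm M Jq Jq_orth hM.1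
  have hRc : (Rq ⊗ₖ (1 : Matrix (Fin m) (Fin m) ℝ)) * M
      = M * (Rq ⊗ₖ (1 : Matrix (Fin n) (Fin n) ℝ)) :=
    sym_to_comm M Rq Rq_orth hM.2.1
  refine ⟨Matrix.of fun i j =>
    (⟨M (0, i) (0, j), M (1, i) (0, j), M (2, i) (0, j), M (3, i) (0, j)⟩ : Q4), ?_⟩
  refine Matrix.ext fun p q => ?_
  obtain ⟨a, i⟩ := p; obtain ⟨b, j⟩ := q
  have hbs := block_structure (Matrix.of fun a b => M (a, i) (b, j))
    (entry_comm M Jq hJc i j) (entry_comm M Rq hRc i j)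
  have h2 := congrFun (congrFun hbs a) b
  rw [psi_apply]
  exact h2.symm

end MSB

/-- Multi-Symplectic Bidiagonalization Decomposition: every JRS-symmetric
`M ∈ ℝ^{4m×4n}` factors as `M = Q ⬝ diag(B,B,B,B) ⬝ Pᵀ` with `Q`, `P` orthogonal
multi-symplectic and `B` upper bidiagonal. -/
theorem multiSymplectic_bidiagonalization {m n : ℕ}
    (M : Matrix (Fin 4 × Fin m) (Fin 4 × Fin n) ℝ) (hM : JRSSymmetric M) :
    ∃ (Q : Matrix (Fin 4 × Fin m) (Fin 4 × Fin m) ℝ)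
      (P : Matrix (Fin 4 × Fin n) (Fin 4 × Fin n) ℝ)
      (B : Matrix (Fin m) (Fin n) ℝ),
      (Q * Qᵀ = 1 ∧ Qᵀ * Q = 1) ∧ (P * Pᵀ = 1 ∧ Pᵀ * P = 1) ∧
      MultiSymplectic Q ∧ MultiSymplectic P ∧
      UpperBidiagonal B ∧
      M = Q * blockDiag4 B * Pᵀ := by
  obtain ⟨A, hA⟩ := MSB.jrs_psi M hM
  obtain ⟨U, V, B, hU1, hU2, hV1, hV2, -, hBd, hfac⟩ := MSB.quat_bidiag n m A
  have hQo : MSB.psi U * (MSB.psi U)ᵀ = 1 := by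
    rw [MSB.psi_transpose, ← MSB.psi_mul, hU1, MSB.psi_one]
  have hQo' : (MSB.psi U)ᵀ * MSB.psi U = 1 := by
    rw [MSB.psi_transpose, ← MSB.psi_mul, hU2, MSB.psi_one]
  have hPo : MSB.psi V * (MSB.psi V)ᵀ = 1 := by
    rw [MSB.psi_transpose, ← MSB.psi_mul, hV1, MSB.psi_one]
  have hPo' : (MSB.psi V)ᵀ * MSB.psi V = 1 := by
    rw [MSB.psi_transpose, ← MSB.psi_mul, hV2, MSB.psi_one]
  refine ⟨MSB.psi U, MSB.psi V, B, ⟨hQo, hQo'⟩, ⟨hPo, hPo'⟩, ?_, ?_, hBd, ?_⟩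
  · refine ⟨?_, ?_, ?_⟩
    · show MSB.psi U * (Jq ⊗ₖ (1 : Matrix (Fin m) (Fin m) ℝ)) * (MSB.psi U)ᵀ
        = Jq ⊗ₖ (1 : Matrix (Fin m) (Fin m) ℝ)
      rw [MSB.psi_comm_gen U Jq MSB.rep_commJ, Matrix.mul_assoc, hQo, Matrix.mul_one]
    · show MSB.psi U * (Rq ⊗ₖ (1 : Matrix (Fin m) (Fin m) ℝ)) * (MSB.psi U)ᵀ
        = Rq ⊗ₖ (1 : Matrix (Fin m) (Fin m) ℝ)
      rw [MSB.psi_comm_gen U Rq MSB.rep_commR, Matrix.mul_assoc, hQo, Matrix.mul_one]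
    · show MSB.psi U * (Sq ⊗ₖ (1 : Matrix (Fin m) (Fin m) ℝ)) * (MSB.psi U)ᵀ
        = Sq ⊗ₖ (1 : Matrix (Fin m) (Fin m) ℝ)
      rw [MSB.psi_comm_gen U Sq MSB.rep_commS, Matrix.mul_assoc, hQo, Matrix.mul_one]
  · refine ⟨?_, ?_, ?_⟩
    · show MSB.psi V * (Jq ⊗ₖ (1 : Matrix (Fin n) (Fin n) ℝ)) * (MSB.psi V)ᵀ
        = Jq ⊗ₖ (1 : Matrix (Fin n) (Fin n) ℝ)
      rw [MSB.psi_comm_gen V Jq MSB.rep_commJ, Matrix.mul_assoc, hPo, Matrix.mul_one]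
    · show MSB.psi V * (Rq ⊗ₖ (1 : Matrix (Fin n) (Fin n) ℝ)) * (MSB.psi V)ᵀ
        = Rq ⊗ₖ (1 : Matrix (Fin n) (Fin n) ℝ)
      rw [MSB.psi_comm_gen V Rq MSB.rep_commR, Matrix.mul_assoc, hPo, Matrix.mul_one]
    · show MSB.psi V * (Sq ⊗ₖ (1 : Matrix (Fin n) (Fin n) ℝ)) * (MSB.psi V)ᵀ
        = Sq ⊗ₖ (1 : Matrix (Fin n) (Fin n) ℝ)
      rw [MSB.psi_comm_gen V Sq MSB.rep_commS, Matrix.mul_assoc, hPo, Matrix.mul_one]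
  · rw [← hA, hfac, MSB.psi_mul, MSB.psi_mul, MSB.psi_map, MSB.psi_transpose]
    rfl
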